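/- arXiv:1609.07746 — 4 statements merged into one kernel-verified Lean document; each statement's English description precedes it below -/
import Mathlib

section
/- Let (R,m) be a Noetherian local ring of dimension d > 0, Q an m-primary ideal, and K an ideal containing Q. Writing the Hilbert polynomials P_K(Q,n) = Σ_{i=0}^d (-1)^i g_i(Q) C(n+d-i-1, d-i) and P(Q,n) = Σ_{i=0}^d (-1)^i e_i(Q) C(n+d-i-1, d-i), and the fiber cone polynomial P(F,n) = Σ_{i=0}^{d-1} (-1)^i f_i(Q) C(n+d-i-1, d-1-i), one has g_0(Q) = e_0(Q) and f_i(Q) = e_{i+1}(Q) - g_{i+1}(Q) + e_i(Q) - g_i(Q) for 0 ≤ i ≤ d-1. -/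
open IsLocalRing

/-- The length of an `R`-module `M`, realized as the Krull dimension of its
lattice of submodules. -/
noncomputable def mLen (R M : Type*) [CommRing R] [AddCommGroup M] [Module R M] :
    WithBot ℕ∞ :=
  Order.krullDim (Submodule R M)

/-- `Q` is a parameter ideal of the `d`-dimensional Noetherian local ring `R`:
it is generated by `d` elements and is `m`-primary. -/
def IsParameterIdeal (R : Type*) [CommRing R] [IsLocalRing R] (d : ℕ) (Q : Ideal R) : Prop :=
  (∃ x : Fin d → R, Q = Ideal.span (Set.range x)) ∧ Q.radical = maximalIdeal R

/-- There is a regular sequence of length `e` contained in the maximal ideal. -/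
def HasRegSeq (R : Type*) [CommRing R] [IsLocalRing R] (e : ℕ) : Prop :=
  ∃ rs : List R, rs.length = e ∧ (∀ r ∈ rs, r ∈ maximalIdeal R) ∧
    RingTheory.Sequence.IsRegular R rs

/-- A Noetherian local ring of dimension `d` is Cohen-Macaulay iff its depth is `d`,
i.e. iff there is a regular sequence of length `d` in the maximal ideal. -/
def IsCMLocal (R : Type*) [CommRing R] [IsLocalRing R] (d : ℕ) : Prop :=
  HasRegSeq R d

/-- The depth of the local ring `R` equals `e`. -/
def DepthEq (R : Type*) [CommRing R] [IsLocalRing R] (e : ℕ) : Prop :=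
  HasRegSeq R e ∧ ¬ HasRegSeq R (e + 1)

/-- `R` is unmixed: every associated prime of the `m`-adic completion `R̂`
has `dim R̂/p = dim R̂`. -/
def IsUnmixed (R : Type*) [CommRing R] [IsLocalRing R] : Prop :=
  ∀ p ∈ associatedPrimes (AdicCompletion (maximalIdeal R) R)
      (AdicCompletion (maximalIdeal R) R),
    ringKrullDim ((AdicCompletion (maximalIdeal R) R) ⧸ p) =
      ringKrullDim (AdicCompletion (maximalIdeal R) R)

/-- The alternating binomial expansion `Σ_{i=0}^d (-1)^i g_i C(n+d-i-1, d-i)`. -/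
def hilbSum (d : ℕ) (g : ℕ → ℤ) (n : ℕ) : ℤ :=
  ∑ i ∈ Finset.range (d + 1), (-1 : ℤ) ^ i * g i * ((n + d - i - 1).choose (d - i) : ℤ)

/-- The alternating binomial expansion `Σ_{i=0}^{d-1} (-1)^i f_i C(n+d-i-1, d-1-i)`. -/
def fiberSum (d : ℕ) (f : ℕ → ℤ) (n : ℕ) : ℤ :=
  ∑ i ∈ Finset.range d, (-1 : ℤ) ^ i * f i * ((n + d - i - 1).choose (d - 1 - i) : ℤ)

/-- The length `ℓ(Qⁿ/KQⁿ)` of the `n`-th component of the fiber cone `F_K(Q)`. -/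
noncomputable def fibLen (R : Type*) [CommRing R] (Q K : Ideal R) (n : ℕ) : WithBot ℕ∞ :=
  mLen R (↥(Q ^ n) ⧸ (Submodule.comap (Submodule.subtype (Q ^ n : Submodule R R))
    (K * Q ^ n : Ideal R)))

/-- `x ∈ Q`, and the degree-one initial form `x*` of `x` in the associated graded ring
`G(Q)` is nonzero and superficial: `(Qⁿ : x) ∩ Q^c = Q^{n-1}` for all `n > c`. -/
def IsGSuperficial {R : Type*} [CommRing R] (Q : Ideal R) (x : R) : Prop :=
  x ∈ Q ∧ x ∉ Q ^ 2 ∧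
    ∃ c > 0, ∀ n > c, Submodule.colon (Q ^ n) (Ideal.span {x}) ⊓ Q ^ c = Q ^ (n - 1)

/-- `x ∈ Q`, and the degree-one initial form `x°` of `x` in the fiber cone `F_K(Q)` is
nonzero and superficial: `(0 : x°) ∩ F_K(Q)_n = 0` for all `n > c`, i.e.
`(KQ^{n+1} : x) ∩ Qⁿ ⊆ KQⁿ` for all `n > c`. -/
def IsFSuperficial {R : Type*} [CommRing R] (Q K : Ideal R) (x : R) : Prop :=
  x ∈ Q ∧ x ∉ K * Q ∧
    ∃ c > 0, ∀ n > c,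
      Submodule.colon (K * Q ^ (n + 1)) (Ideal.span {x}) ⊓ Q ^ n ≤ K * Q ^ n


/-! ### Auxiliary lemmas for `stmt_1` -/

section Stmt1Aux

open Order

private lemma aux_height_succ_le {α : Type*} [Preorder α] {x y : α} (h : x < y) :
    Order.height x + 1 ≤ Order.height y := by
  rw [Order.height_eq_iSup_lt_height y]
  exact le_iSup₂_of_le x h le_rfl

private lemma aux_chain_bound {α : Type*} [Lattice α] [IsModularLattice α] (z : α) :
    ∀ (n : ℕ) (p : LTSeries α), p.length = n →
      (n : ℕ∞) ≤ Order.height (⟨p.last ⊓ z, inf_le_right⟩ : Set.Iic z)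
        + Order.height (⟨p.last ⊔ z, le_sup_right⟩ : Set.Ici z) := by
  intro n
  induction n with
  | zero => intro p hp; simp
  | succ n ih =>
    intro p hp
    have hne : p.length ≠ 0 := by omega
    have hlt : p.eraseLast.last < p.last := p.eraseLast_last_rel_last hne
    have hlen : p.eraseLast.length = n := by simp [hp]
    have IH := ih p.eraseLast hlen
    have hmono := (strictMono_inf_prod_sup (z := z)) hlt
    have hcast : ((n+1 : ℕ) : ℕ∞) = (n : ℕ∞) + 1 := by push_cast; ring
    rcases Prod.lt_iff.mp hmono with ⟨h1, h2⟩ | ⟨h1, h2⟩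
    · have hh1 := aux_height_succ_le
        (x := (⟨p.eraseLast.last ⊓ z, inf_le_right⟩ : Set.Iic z))
        (y := (⟨p.last ⊓ z, inf_le_right⟩ : Set.Iic z)) (Subtype.mk_lt_mk.mpr h1)
      have hh2 : Order.height (⟨p.eraseLast.last ⊔ z, le_sup_right⟩ : Set.Ici z)
          ≤ Order.height (⟨p.last ⊔ z, le_sup_right⟩ : Set.Ici z) :=
        Order.height_mono (Subtype.mk_le_mk.mpr h2)
      rw [hcast]
      calc (n : ℕ∞) + 1 ≤ _ + 1 := add_le_add IH le_rfl
        _ ≤ _ := by rw [add_right_comm]; exact add_le_add hh1 hh2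
    · have hh1 : Order.height (⟨p.eraseLast.last ⊓ z, inf_le_right⟩ : Set.Iic z)
          ≤ Order.height (⟨p.last ⊓ z, inf_le_right⟩ : Set.Iic z) :=
        Order.height_mono (Subtype.mk_le_mk.mpr h1)
      have hh2 := aux_height_succ_le
        (x := (⟨p.eraseLast.last ⊔ z, le_sup_right⟩ : Set.Ici z))
        (y := (⟨p.last ⊔ z, le_sup_right⟩ : Set.Ici z)) (Subtype.mk_lt_mk.mpr h2)
      rw [hcast]
      calc (n : ℕ∞) + 1 ≤ _ + 1 := add_le_add IH le_rfl
        _ ≤ _ := by rw [add_assoc]; exact add_le_add hh1 hh2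

private lemma aux_exists_chain_of_krullDim_eq {α : Type*} [Preorder α] {n : ℕ}
    (h : Order.krullDim α = n) : ∃ p : LTSeries α, p.length = n := by
  have hne : Nonempty α := by
    by_contra hne
    rw [not_nonempty_iff] at hne
    rw [Order.krullDim_eq_bot] at h
    exact absurd h (by simp)
  by_contra hc
  push_neg at hc
  have hn0 : n ≠ 0 := by
    intro h0
    exact hc (RelSeries.singleton _ (Classical.arbitrary α)) (by simp [h0])
  have hb : ∀ p : LTSeries α, (p.length : WithBot ℕ∞) ≤ ((n - 1 : ℕ) : WithBot ℕ∞) := by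
    intro p
    have h1 : (p.length : WithBot ℕ∞) ≤ n := h ▸ Order.LTSeries.length_le_krullDim p
    have h2 : p.length ≤ n := by exact_mod_cast h1
    have h3 : p.length ≠ n := hc p
    exact_mod_cast (by omega : p.length ≤ n - 1)
  have hle : Order.krullDim α ≤ ((n-1 : ℕ) : WithBot ℕ∞) := iSup_le hb
  rw [h] at hle
  have : n ≤ n - 1 := by exact_mod_cast hle
  omega

private lemma aux_kd_add {α : Type*} [Lattice α] [IsModularLattice α] (z : α) (a b c : ℕ)
    (ha : Order.krullDim (Set.Iic z) = a) (hb : Order.krullDim (Set.Ici z) = b)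
    (hc : Order.krullDim α = c) : c = a + b := by
  have hle : c ≤ a + b := by
    have hub : ∀ p : LTSeries α, (p.length : WithBot ℕ∞) ≤ ((a + b : ℕ) : WithBot ℕ∞) := by
      intro p
      have h1 := aux_chain_bound z p.length p rfl
      have h2 : Order.height (⟨p.last ⊓ z, inf_le_right⟩ : Set.Iic z) ≤ (a : ℕ∞) := by
        have := Order.height_le_krullDim (⟨p.last ⊓ z, inf_le_right⟩ : Set.Iic z)
        rw [ha] at this
        exact_mod_cast this
      have h3 : Order.height (⟨p.last ⊔ z, le_sup_right⟩ : Set.Ici z) ≤ (b : ℕ∞) := by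
        have := Order.height_le_krullDim (⟨p.last ⊔ z, le_sup_right⟩ : Set.Ici z)
        rw [hb] at this
        exact_mod_cast this
      have : (p.length : ℕ∞) ≤ (a : ℕ∞) + (b : ℕ∞) := h1.trans (add_le_add h2 h3)
      exact_mod_cast this
    have h4 : Order.krullDim α ≤ ((a + b : ℕ) : WithBot ℕ∞) := iSup_le hub
    rw [hc] at h4
    exact_mod_cast h4
  have hge : a + b ≤ c := by
    obtain ⟨p, hp⟩ := aux_exists_chain_of_krullDim_eq ha
    obtain ⟨q, hq⟩ := aux_exists_chain_of_krullDim_eq hb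
    have hptop : p.last = (⟨z, le_rfl⟩ : Set.Iic z) := by
      by_contra hne
      have hlt : p.last < ⟨z, le_rfl⟩ := lt_of_le_of_ne (by exact p.last.2) hne
      have h5 := Order.LTSeries.length_le_krullDim (p.snoc _ hlt)
      rw [ha, RelSeries.snoc_length] at h5
      have : p.length + 1 ≤ a := by exact_mod_cast h5
      omega
    have hqbot : q.head = (⟨z, le_rfl⟩ : Set.Ici z) := by
      by_contra hne
      have hlt : (⟨z, le_rfl⟩ : Set.Ici z) < q.head :=
        lt_of_le_of_ne (by exact q.head.2) (Ne.symm hne)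
      have h5 := Order.LTSeries.length_le_krullDim (q.cons _ hlt)
      rw [hb, RelSeries.cons_length] at h5
      have : q.length + 1 ≤ b := by exact_mod_cast h5
      omega
    have hsm : StrictMono (Subtype.val : Set.Iic z → α) := fun _ _ h => h
    have hsm' : StrictMono (Subtype.val : Set.Ici z → α) := fun _ _ h => h
    let p' := p.map _ hsm
    let q' := q.map _ hsm'
    have hconn : p'.last = q'.head := by
      show (p.map _ hsm).last = (q.map _ hsm').head
      rw [LTSeries.last_map, LTSeries.head_map, hptop, hqbot]
    have h6 := Order.LTSeries.length_le_krullDim (p'.smash q' hconn)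
    rw [hc] at h6
    have hlen : (p'.smash q' hconn).length = a + b := by
      simp [RelSeries.smash_length, p', q', hp, hq]
    rw [hlen] at h6
    exact_mod_cast h6
  omega

private lemma aux_mLen_congr {R M M' : Type*} [CommRing R] [AddCommGroup M] [Module R M]
    [AddCommGroup M'] [Module R M'] (e : M ≃ₗ[R] M') : mLen R M = mLen R M' :=
  Order.krullDim_eq_of_orderIso (Submodule.orderIsoMapComap e)

private lemma aux_mLen_additive {R M : Type*} [CommRing R] [AddCommGroup M] [Module R M]
    (N : Submodule R M) (a b c : ℕ)
    (ha : mLen R N = a) (hb : mLen R (M ⧸ N) = b) (hc : mLen R M = c) :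
    c = a + b := by
  apply aux_kd_add (α := Submodule R M) N a b c
  · rw [← Order.krullDim_eq_of_orderIso (Submodule.mapIic N)]; exact ha
  · exact Eq.trans (Eq.symm (Order.krullDim_eq_of_orderIso N.comapMkQRelIso)) hb
  · exact hc

private lemma aux_len_add {R : Type*} [CommRing R] (p q : Ideal R) (hpq : p ≤ q) (a b c : ℕ)
    (ha : mLen R (↥q ⧸ (Submodule.comap (Submodule.subtype q) p)) = a)
    (hb : mLen R (R ⧸ q) = b) (hc : mLen R (R ⧸ p) = c) : c = a + b := by
  apply aux_mLen_additive (M := R ⧸ p) (Submodule.map p.mkQ q) a b c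
  · rw [← ha]
    symm
    have hker : LinearMap.ker (p.mkQ ∘ₗ (Submodule.subtype q)) =
        Submodule.comap (Submodule.subtype q) p := by
      rw [LinearMap.ker_comp, Submodule.ker_mkQ]
    have hrange : LinearMap.range (p.mkQ ∘ₗ (Submodule.subtype q)) =
        Submodule.map p.mkQ q := by
      rw [LinearMap.range_comp, Submodule.range_subtype]
    calc mLen R (↥q ⧸ (Submodule.comap (Submodule.subtype q) p))
        = mLen R (↥q ⧸ LinearMap.ker (p.mkQ ∘ₗ (Submodule.subtype q))) := by
          rw [hker]
      _ = mLen R (LinearMap.range (p.mkQ ∘ₗ (Submodule.subtype q))) :=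
          aux_mLen_congr (LinearMap.quotKerEquivRange _)
      _ = mLen R (Submodule.map p.mkQ q) := by rw [hrange]
  · rw [← hb]
    exact aux_mLen_congr (Submodule.quotientQuotientEquivQuotient p q hpq)
  · exact hc

/-- The normalized alternating binomial sum. -/
private def auxS (d k : ℕ) (a : ℕ → ℤ) (m : ℕ) : ℤ :=
  ∑ j ∈ Finset.range (k+1), (-1:ℤ)^j * a j * ((m + (d - j)).choose (k - j) : ℤ)

private lemma auxS_zero (d : ℕ) (a : ℕ → ℤ) (m : ℕ) : auxS d 0 a m = a 0 := by
  simp [auxS]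

private lemma auxS_delta (d k : ℕ) (a : ℕ → ℤ) (m : ℕ) :
    auxS d (k+1) a (m+1) - auxS d (k+1) a m = auxS d k a m := by
  rw [auxS, auxS, auxS, Finset.sum_range_succ (n := k+1), Finset.sum_range_succ (n := k+1)]
  have hlast : ∀ m' : ℕ, ((m' + (d - (k+1))).choose (k + 1 - (k+1)) : ℤ) = 1 := by
    intro m'; simp
  rw [hlast, hlast]
  rw [show ∀ A B C : ℤ, (A + C) - (B + C) = A - B by intros; ring]
  rw [← Finset.sum_sub_distrib]
  apply Finset.sum_congr rfl
  intro j hj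
  have hj' : j ≤ k := by simpa [Nat.lt_succ_iff] using hj
  have h1 : k + 1 - j = (k - j) + 1 := by omega
  have h2 : m + 1 + (d - j) = (m + (d - j)) + 1 := by omega
  rw [h1, h2, Nat.choose_succ_succ]
  push_cast
  ring

private lemma auxS_zero_coeffs (d : ℕ) :
    ∀ (k : ℕ) (a : ℕ → ℤ) (N : ℕ), (∀ m, N ≤ m → auxS d k a m = 0) → ∀ j ≤ k, a j = 0 := by
  intro k
  induction k with
  | zero =>
    intro a N h j hj
    interval_cases j
    rw [← auxS_zero d a N]
    exact h N le_rfl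
  | succ k ih =>
    intro a N h j hj
    have h' : ∀ m, N ≤ m → auxS d k a m = 0 := by
      intro m hm
      rw [← auxS_delta d k a m, h (m+1) (by omega), h m hm, sub_zero]
    rcases Nat.lt_succ_iff_lt_or_eq.mp (Nat.lt_succ_of_le hj) with h1 | h1
    · exact ih a N h' j (by omega)
    · subst h1
      have hN := h N le_rfl
      rw [auxS, Finset.sum_range_succ] at hN
      rw [Finset.sum_eq_zero (fun i hi => by
        rw [ih a N h' i (by simpa [Nat.lt_succ_iff] using hi)]; ring)] at hN
      simp only [Nat.sub_self, Nat.choose_zero_right, Nat.cast_one, mul_one, zero_add] at hN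
      rcases mul_eq_zero.mp hN with h2 | h2
      · exact absurd h2 (by positivity)
      · exact h2

private lemma auxS_add (d k : ℕ) (a b : ℕ → ℤ) (m : ℕ) :
    auxS d k (fun j => a j + b j) m = auxS d k a m + auxS d k b m := by
  rw [auxS, auxS, auxS, ← Finset.sum_add_distrib]
  apply Finset.sum_congr rfl
  intro j _
  ring

private lemma auxS_sub (d k : ℕ) (a b : ℕ → ℤ) (m : ℕ) :
    auxS d k (fun j => a j - b j) m = auxS d k a m - auxS d k b m := by
  rw [auxS, auxS, auxS, ← Finset.sum_sub_distrib]
  apply Finset.sum_congr rfl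
  intro j _
  ring

private lemma auxS_descend (d : ℕ) (a b : ℕ → ℤ) (N k : ℕ)
    (h : ∀ m, N ≤ m → auxS d (k+1) a m = auxS d k b m) :
    ∀ t ≤ k, ∀ m, N ≤ m → auxS d (k+1-t) a m = auxS d (k-t) b m := by
  intro t
  induction t with
  | zero => intro _ m hm; simpa using h m hm
  | succ t ih =>
    intro ht m hm
    have IH := ih (by omega)
    have e1 : k + 1 - t = (k - t) + 1 := by omega
    have d1 : auxS d (k-t) a m = auxS d (k+1-t) a (m+1) - auxS d (k+1-t) a m := by
      rw [e1]; exact (auxS_delta d (k-t) a m).symm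
    have d2 : auxS d (k-t-1) b m = auxS d (k-t) b (m+1) - auxS d (k-t) b m := by
      conv_lhs => rw [show k - t - 1 = (k-t) - 1 by omega]
      rw [show k - t = ((k-t) - 1) + 1 from by omega]
      exact (auxS_delta d ((k-t)-1) b m).symm
    rw [show k + 1 - (t+1) = k - t from by omega, show k - (t+1) = k - t - 1 from by omega]
    rw [d1, d2, IH m hm, IH (m+1) (by omega)]

private lemma auxS_shift (d i : ℕ) (h : ℕ → ℤ) (h0 : h 0 = 0) (hi : i < d) (m : ℕ) :
    auxS d (i+1) h m + auxS d i (fun j => h (j+1)) m + auxS d i h m = 0 := by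
  have hA : auxS d (i+1) h m
      = ∑ j ∈ Finset.range (i+1), (-1:ℤ)^(j+1) * h (j+1)
          * ((m + (d - (j+1))).choose (i - j) : ℤ) := by
    rw [auxS, Finset.sum_range_succ']
    simp only [h0, pow_zero, one_mul, mul_zero, zero_mul, add_zero]
    apply Finset.sum_congr rfl
    intro j _
    rw [Nat.succ_sub_succ]
  have hC : auxS d i h m
      = ∑ j ∈ Finset.range i, (-1:ℤ)^(j+1) * h (j+1)
          * ((m + (d - (j+1))).choose (i - (j+1)) : ℤ) := by
    rcases Nat.eq_zero_or_pos i with h1 | h1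
    · subst h1; simp [auxS, h0]
    · rw [auxS, show i + 1 = (i - 1) + 1 + 1 from by omega, Finset.sum_range_succ']
      simp only [h0, pow_zero, one_mul, mul_zero, zero_mul, add_zero]
      rw [show (i - 1) + 1 = i from by omega]
  rw [hA, hC, auxS]
  rw [← Finset.sum_add_distrib]
  rw [Finset.sum_range_succ]
  have hlastzero : (-1:ℤ)^(i+1) * h (i+1) * ((m + (d - (i+1))).choose (i - i) : ℤ)
      + (-1:ℤ)^i * h (i+1) * ((m + (d - i)).choose (i - i) : ℤ) = 0 := by
    simp only [Nat.sub_self, Nat.choose_zero_right, Nat.cast_one, mul_one, pow_succ]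
    ring
  rw [hlastzero, add_zero, ← Finset.sum_add_distrib]
  apply Finset.sum_eq_zero
  intro j hj
  have hj' : j < i := Finset.mem_range.mp hj
  have htop : m + (d - j) = (m + (d - (j+1))) + 1 := by omega
  have hbot : i - j = (i - (j+1)) + 1 := by omega
  rw [htop, hbot, Nat.choose_succ_succ]
  push_cast
  ring

private lemma aux_hilb_eq (d : ℕ) (g : ℕ → ℤ) (m : ℕ) :
    hilbSum d g (m+1) = auxS d d g m := by
  rw [hilbSum, auxS]
  apply Finset.sum_congr rfl
  intro i hi
  have hi' : i ≤ d := by simpa [Nat.lt_succ_iff] using hi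
  rw [show m + 1 + d - i - 1 = m + (d - i) from by omega]

private lemma aux_fiber_eq (d : ℕ) (hd : 0 < d) (f : ℕ → ℤ) (m : ℕ) :
    fiberSum d f (m+1) = auxS d (d-1) f m := by
  rw [fiberSum, auxS, show (d-1)+1 = d from by omega]
  apply Finset.sum_congr rfl
  intro i hi
  have hi' : i < d := Finset.mem_range.mp hi
  rw [show m + 1 + d - i - 1 = m + (d - i) from by omega,
    show d - 1 - i = (d-1) - i from rfl]

end Stmt1Aux

/-- `g_0(Q) = e_0(Q)` and
`f_i(Q) = e_{i+1}(Q) - g_{i+1}(Q) + e_i(Q) - g_i(Q)` for `0 ≤ i ≤ d-1`. -/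
theorem stmt_1 (R : Type) [CommRing R] [IsLocalRing R] [IsNoetherianRing R]
    (d : ℕ) (hd : 0 < d) (hdim : ringKrullDim R = d)
    (Q K : Ideal R) (hQprim : Q.radical = maximalIdeal R) (hQK : Q ≤ K)
    (lenK lenQ lenF : ℕ → ℕ)
    (hlenK : ∀ n, (lenK n : WithBot ℕ∞) = mLen R (R ⧸ (K * Q ^ n)))
    (hlenQ : ∀ n, (lenQ n : WithBot ℕ∞) = mLen R (R ⧸ (Q ^ n)))
    (hlenF : ∀ n, (lenF n : WithBot ℕ∞) = fibLen R Q K n)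
    (g e f : ℕ → ℤ)
    (hg : ∃ N, ∀ n ≥ N, (lenK n : ℤ) = hilbSum d g n)
    (he : ∃ N, ∀ n ≥ N, (lenQ n : ℤ) = hilbSum d e n)
    (hf : ∃ N, ∀ n ≥ N, (lenF n : ℤ) = fiberSum d f n) :
    g 0 = e 0 ∧ ∀ i, i ≤ d - 1 → f i = e (i + 1) - g (i + 1) + e i - g i := by
  obtain ⟨N1, hg⟩ := hg
  obtain ⟨N2, he⟩ := he
  obtain ⟨N3, hf⟩ := hf
  -- Step 1: length additivity  lenK n = lenF n + lenQ n
  have hadd : ∀ n, lenK n = lenF n + lenQ n := by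
    intro n
    apply aux_len_add (R := R) (K * Q ^ n) (Q ^ n) Ideal.mul_le_right
    · exact (hlenF n).symm
    · exact (hlenQ n).symm
    · exact (hlenK n).symm
  set hdiff : ℕ → ℤ := fun j => g j - e j with hdiff_def
  set NN := N1 + N2 + N3 with hNN
  -- Step 2: the key polynomial identity
  have key : ∀ m, NN ≤ m → auxS d d hdiff m = auxS d (d-1) f m := by
    intro m hm
    have h1 := hg (m+1) (by omega)
    have h2 := he (m+1) (by omega)
    have h3 := hf (m+1) (by omega)
    rw [aux_hilb_eq] at h1 h2
    rw [aux_fiber_eq d hd] at h3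
    have h4 := hadd (m+1)
    have h5 : (lenK (m+1) : ℤ) = (lenF (m+1) : ℤ) + (lenQ (m+1) : ℤ) := by
      exact_mod_cast congrArg (Nat.cast : ℕ → ℤ) h4
    rw [hdiff_def, auxS_sub, ← h1, ← h2, ← h3]
    linarith
  -- Step 3: descend
  have key' : ∀ m, NN ≤ m → auxS d ((d-1)+1) hdiff m = auxS d (d-1) f m := by
    intro m hm
    rw [show (d-1)+1 = d from by omega]
    exact key m hm
  have desc := auxS_descend d hdiff f NN (d-1) key'
  -- Step 4: g 0 = e 0
  have hstep1 : ∀ m, NN ≤ m → auxS d 1 hdiff m = auxS d 0 f m := by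
    intro m hm
    have := desc (d-1) le_rfl m hm
    rwa [show (d-1)+1-(d-1) = 1 from by omega, show (d-1)-(d-1) = 0 from by omega] at this
  have h0 : hdiff 0 = 0 := by
    have hdel := auxS_delta d 0 hdiff NN
    rw [hstep1 (NN+1) (by omega), hstep1 NN le_rfl, auxS_zero, auxS_zero, auxS_zero, sub_self]
      at hdel
    exact hdel.symm
  have hge : g 0 = e 0 := by
    have : g 0 - e 0 = 0 := h0
    linarith
  refine ⟨hge, ?_⟩
  -- Step 5: the fiber coefficients
  have hvan : ∀ m, NN ≤ m →
      auxS d (d-1) (fun j => f j + (hdiff j + hdiff (j+1))) m = 0 := by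
    intro m hm
    rw [auxS_add, auxS_add]
    have hsh := auxS_shift d (d-1) hdiff h0 (by omega) m
    have hk := key m hm
    rw [show (d-1)+1 = d from by omega] at hsh
    linarith
  have hcoef := auxS_zero_coeffs d (d-1) (fun j => f j + (hdiff j + hdiff (j+1))) NN hvan
  intro i hi
  have := hcoef i hi
  simp only [hdiff_def] at this
  linarith
end

section
/- Let (R,m) be a Noetherian local ring, Q an ideal, K an m-primary ideal with Q ⊆ K, and x ∈ Q such that x° is F_K(Q)-superficial and x* is G(Q)-superficial. Then there exists c > 0 such that (KQ^n : x) ∩ Q^c = KQ^{n-1} for all n > c. Moreover if x is a regular element of R, then (KQ^n : x) = KQ^{n-1} for all n ≫ 0. -/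
open IsLocalRing

/-- if `x°` is `F_K(Q)`-superficial and `x*` is `G(Q)`-superficial, then
there is `c > 0` with `(KQⁿ : x) ∩ Q^c = KQ^{n-1}` for all `n > c`; moreover if `x` is a
regular element then `(KQⁿ : x) = KQ^{n-1}` for all `n ≫ 0`. -/
theorem stmt_4 (R : Type) [CommRing R] [IsLocalRing R] [IsNoetherianRing R]
    (Q K : Ideal R) (hKprim : K.radical = maximalIdeal R) (hQK : Q ≤ K)
    (x : R) (hF : IsFSuperficial Q K x) (hG : IsGSuperficial Q x) :
    (∃ c > 0, ∀ n > c,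
      Submodule.colon (K * Q ^ n) (Ideal.span {x}) ⊓ Q ^ c = K * Q ^ (n - 1)) ∧
    (x ∈ nonZeroDivisors R →
      ∃ N, ∀ n ≥ N,
        Submodule.colon (K * Q ^ n) (Ideal.span {x}) = K * Q ^ (n - 1)) := by
  obtain ⟨hxQ, -, cF, hcFpos, hFs⟩ := hF
  obtain ⟨-, -, cG, hcGpos, hGs⟩ := hG
  have colon_mem : ∀ (N : Submodule R R) (r : R),
      r ∈ N.colon (Ideal.span {x}) ↔ x * r ∈ N := fun N r => by
    constructor
    · intro h
      rw [mul_comm]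
      exact Submodule.mem_colon.mp h x (Ideal.mem_span_singleton_self x)
    · intro h
      rw [Submodule.mem_colon]
      intro s hs
      obtain ⟨a, rfl⟩ := Ideal.mem_span_singleton'.mp hs
      have he : r • (a * x) = a • (x * r) := by simp only [smul_eq_mul]; ring
      rw [he]
      exact N.smul_mem a h
  set c := cF + cG with hc
  have key : ∀ n > c,
      Submodule.colon (K * Q ^ n) (Ideal.span {x}) ⊓ Q ^ c = K * Q ^ (n - 1) := by
    intro n hn
    apply le_antisymm
    · intro y hy
      obtain ⟨hy1, hy2⟩ := Submodule.mem_inf.mp hy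
      rw [colon_mem] at hy1
      have hyQn1 : y ∈ Q ^ (n - 1) := by
        have h := hGs n (by omega)
        have hmem : y ∈ Submodule.colon (Q ^ n) (Ideal.span {x}) ⊓ Q ^ cG := by
          refine Submodule.mem_inf.mpr ⟨?_, ?_⟩
          · rw [colon_mem]
            exact Ideal.mul_le_right hy1
          · exact Ideal.pow_le_pow_right (by omega) hy2
        rw [h] at hmem; exact hmem
      have h2 := hFs (n - 1) (by omega)
      have hmem : y ∈ Submodule.colon (K * Q ^ (n - 1 + 1)) (Ideal.span {x}) ⊓ Q ^ (n - 1) := by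
        refine Submodule.mem_inf.mpr ⟨?_, hyQn1⟩
        rw [colon_mem]
        have heq : n - 1 + 1 = n := by omega
        rw [heq]; exact hy1
      exact h2 hmem
    · intro y hy
      refine Submodule.mem_inf.mpr ⟨?_, ?_⟩
      · rw [colon_mem]
        have hQn : (K * Q ^ (n - 1)) * Q = K * Q ^ n := by
          rw [mul_assoc, ← pow_succ]
          congr 2
          omega
        have hmul : y * x ∈ (K * Q ^ (n - 1)) * Q := Ideal.mul_mem_mul hy hxQ
        rw [hQn] at hmul
        rwa [mul_comm y x] at hmul
      · exact (le_trans Ideal.mul_le_right (Ideal.pow_le_pow_right (by omega))) hy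
  refine ⟨⟨c, by omega, key⟩, ?_⟩
  intro hx
  obtain ⟨k, hk⟩ := Q.exists_pow_inf_eq_pow_smul (Ideal.span {x} : Submodule R R)
  refine ⟨k + c + 1, fun n hn => ?_⟩
  apply le_antisymm
  · intro y hy
    rw [colon_mem] at hy
    have hxyQ : x * y ∈ Q ^ n • (⊤ : Submodule R R) ⊓ Ideal.span {x} := by
      refine Submodule.mem_inf.mpr ⟨?_, ?_⟩
      · rw [Ideal.smul_eq_mul, Ideal.mul_top]
        exact Ideal.mul_le_right hy
      · exact Ideal.mul_mem_right y _ (Ideal.mem_span_singleton_self x)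
    rw [hk n (by omega)] at hxyQ
    have hsub : Q ^ (n - k) • (Q ^ k • (⊤ : Submodule R R) ⊓ Ideal.span {x})
        ≤ Q ^ (n - k) • (Ideal.span {x} : Submodule R R) :=
      smul_mono_right _ inf_le_right
    have hxy2 : x * y ∈ (Q ^ (n - k) : Ideal R) * Ideal.span {x} := by
      have h3 := hsub hxyQ
      rwa [Ideal.smul_eq_mul] at h3
    obtain ⟨z, hz, hzy⟩ : ∃ z ∈ (Q ^ (n - k) : Ideal R), x * z = x * y := by
      rw [mul_comm, Ideal.mem_span_singleton_mul] at hxy2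
      obtain ⟨z, hz, hzeq⟩ := hxy2
      exact ⟨z, hz, hzeq⟩
    have hyz : z = y := (mul_cancel_left_mem_nonZeroDivisors hx).mp hzy
    have hyc : y ∈ Q ^ c := hyz ▸ Ideal.pow_le_pow_right (by omega) hz
    have := (key n (by omega)).le (Submodule.mem_inf.mpr ⟨(colon_mem _ y).mpr hy, hyc⟩)
    exact this
  · intro y hy
    have h4 := (key n (by omega)).ge hy
    exact (Submodule.mem_inf.mp h4).1
end

section
/- Let (R,m) be a Noetherian local ring of dimension d > 0, Q an m-primary ideal, K ⊇ Q an ideal, and x ∈ Q such that x* is G(Q)-superficial and x° is F_K(Q)-superficial. Then KQ^n ∩ (0 : x) = 0 and (KQ^n : x) = KQ^{n-1} + (0 : x) for all n ≫ 0. -/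
open IsLocalRing

/-- if `x*` is `G(Q)`-superficial and `x°` is `F_K(Q)`-superficial, then
`KQⁿ ∩ (0 : x) = 0` and `(KQⁿ : x) = KQ^{n-1} + (0 : x)` for all `n ≫ 0`. -/
theorem stmt_5 (R : Type) [CommRing R] [IsLocalRing R] [IsNoetherianRing R]
    (d : ℕ) (hd : 0 < d) (hdim : ringKrullDim R = d)
    (Q K : Ideal R) (hQprim : Q.radical = maximalIdeal R) (hQK : Q ≤ K)
    (x : R) (hG : IsGSuperficial Q x) (hF : IsFSuperficial Q K x) :
    ∃ N ≥ 1, ∀ n ≥ N,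
      (K * Q ^ n) ⊓ Submodule.colon (⊥ : Ideal R) (Ideal.span {x}) = ⊥ ∧
      Submodule.colon (K * Q ^ n) (Ideal.span {x}) =
        K * Q ^ (n - 1) ⊔ Submodule.colon (⊥ : Ideal R) (Ideal.span {x}) := by
  obtain ⟨hxQ, -, c1, hc1pos, hc1⟩ := hG
  obtain ⟨-, -, c2, hc2pos, hc2⟩ := hF
  obtain ⟨k, hk⟩ := Ideal.exists_pow_inf_eq_pow_smul Q (M := R) (Ideal.span {x})
  have hQne : Q ≠ ⊤ := by
    intro h
    have := hQprim
    rw [h, Ideal.radical_top] at this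
    exact (IsLocalRing.maximalIdeal.isMaximal R).ne_top this.symm
  have hKrull : (⨅ i : ℕ, Q ^ i) = ⊥ := Ideal.iInf_pow_eq_bot_of_isLocalRing Q hQne
  -- key: if a*x = 0 and a ∈ Q^c1 then a = 0
  have key : ∀ a : R, a * x = 0 → a ∈ Q ^ c1 → a = 0 := by
    intro a hax haQ
    have : a ∈ (⨅ i : ℕ, Q ^ i) := by
      rw [Submodule.mem_iInf]
      intro i
      have hm : max i c1 + 1 > c1 := by omega
      have := hc1 (max i c1 + 1) hm
      have ha' : a ∈ Submodule.colon (Q ^ (max i c1 + 1)) (Ideal.span {x}) ⊓ Q ^ c1 := by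
        refine Submodule.mem_inf.2 ⟨Ideal.mem_colon_span_singleton.2 ?_, haQ⟩
        rw [hax]; exact zero_mem _
      rw [this] at ha'
      have : Q ^ (max i c1 + 1 - 1) ≤ Q ^ i := Ideal.pow_le_pow_right (by omega)
      exact this ha'
    rwa [hKrull, Submodule.mem_bot] at this
  refine ⟨k + c1 + c2 + 2, by omega, fun n hn => ?_⟩
  have hn1 : 1 ≤ n := by omega
  have hQnc1 : K * Q ^ n ≤ Q ^ c1 :=
    le_trans Ideal.mul_le_right (Ideal.pow_le_pow_right (by omega))
  constructor
  · -- K*Q^n ⊓ (0 : x) = ⊥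
    rw [eq_bot_iff]
    intro a ha
    obtain ⟨haK, hax⟩ := Submodule.mem_inf.1 ha
    have hax' : a * x = 0 := by
      have := Ideal.mem_colon_span_singleton.1 hax
      rwa [Submodule.mem_bot] at this
    rw [Submodule.mem_bot]
    exact key a hax' (hQnc1 haK)
  · -- colon equality
    apply le_antisymm
    · intro a ha
      have hax : a * x ∈ K * Q ^ n := Ideal.mem_colon_span_singleton.1 ha
      -- a*x ∈ Q^n ⊓ (x), apply Artin-Rees
      have hmem : a * x ∈ Q ^ n • (⊤ : Ideal R) ⊓ Ideal.span {x} := by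
        refine Submodule.mem_inf.2 ⟨?_, ?_⟩
        · rw [smul_eq_mul, Ideal.mul_top]
          exact Ideal.mul_le_right hax
        · exact Ideal.mem_span_singleton.2 ⟨a, mul_comm a x⟩
      rw [hk n (by omega)] at hmem
      have hle : Q ^ (n - k) • (Q ^ k • ⊤ ⊓ Ideal.span {x}) ≤
          Q ^ (n - k) • (Ideal.span {x} : Ideal R) := smul_mono_right _ inf_le_right
      have hmem2 := hle hmem
      rw [← Ideal.submodule_span_eq, Submodule.mem_smul_span_singleton] at hmem2
      obtain ⟨b, hbQ, hbx⟩ := hmem2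
      rw [smul_eq_mul] at hbx
      -- b ∈ Q^{n-1} by G-superficiality
      have hb1 : b ∈ Q ^ (n - 1) := by
        have hbc : b ∈ Submodule.colon (Q ^ n) (Ideal.span {x}) ⊓ Q ^ c1 := by
          refine Submodule.mem_inf.2 ⟨Ideal.mem_colon_span_singleton.2 ?_, ?_⟩
          · rw [hbx]
            exact Ideal.mul_le_right hax
          · exact Ideal.pow_le_pow_right (by omega) hbQ
        rwa [hc1 n (by omega)] at hbc
      -- b ∈ K*Q^{n-1} by F-superficiality
      have hb2 : b ∈ K * Q ^ (n - 1) := by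
        refine hc2 (n - 1) (by omega) (Submodule.mem_inf.2 ⟨Ideal.mem_colon_span_singleton.2 ?_, hb1⟩)
        rw [hbx]
        have : n - 1 + 1 = n := by omega
        rw [this]
        exact hax
      have hab : a - b ∈ Submodule.colon (⊥ : Ideal R) (Ideal.span {x}) := by
        refine Ideal.mem_colon_span_singleton.2 ?_
        rw [Submodule.mem_bot, sub_mul, hbx, sub_self]
      have : a = b + (a - b) := by ring
      rw [this]
      exact Submodule.add_mem_sup hb2 hab
    · refine sup_le ?_ ?_
      · intro a ha
        refine Ideal.mem_colon_span_singleton.2 ?_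
        have : a * x ∈ (K * Q ^ (n - 1)) * Q := Ideal.mul_mem_mul ha hxQ
        rwa [mul_assoc, ← pow_succ, Nat.sub_add_cancel hn1] at this
      · intro a ha
        refine Ideal.mem_colon_span_singleton.2 ?_
        have := Ideal.mem_colon_span_singleton.1 ha
        rw [Submodule.mem_bot] at this
        rw [this]
        exact zero_mem _
end

section
/- Let (R,m) be a Noetherian local ring of dimension d > 0, Q an m-primary ideal, K ⊇ Q an ideal, and x ∈ Q with x* G(Q)-superficial and x° F_K(Q)-superficial. Set R̄ = R/(x), Q̄ = QR̄, K̄ = KR̄. Then the Hilbert coefficients satisfy g_i(Q̄) = g_i(Q) for 0 ≤ i ≤ d-2 and g_{d-1}(Q̄) = g_{d-1}(Q) + (-1)^{d-1} ℓ(0 : x). -/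
open IsLocalRing

/- ===== Auxiliary machinery ===== -/
open Order

open Order

section KrullAdd
variable {α : Type*} [Lattice α] [IsModularLattice α]

private lemma step_ineq {β : Type*} [Preorder β] {u v : β} (h : u < v) {w : ℕ∞}
    (hw : w ≤ Order.height u) : w + 1 ≤ Order.height v := by
  by_cases hfin : Order.height u < ⊤
  · exact le_trans (add_le_add_left hw 1)
      (ENat.add_one_le_iff hfin.ne |>.mpr (Order.height_strictMono h hfin))
  · have : Order.height v = ⊤ := by
      have := Order.height_mono h.le
      rw [not_lt, top_le_iff] at hfin
      rw [hfin] at this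
      exact top_le_iff.mp this
    simp [this]

private lemma chain_len_le (b : α) : ∀ (n : ℕ) (p : LTSeries α), p.length = n →
    (n : ℕ∞) ≤ Order.height (⟨p.last ⊓ b, inf_le_right⟩ : Set.Iic b)
      + Order.height (⟨p.last ⊔ b, le_sup_right⟩ : Set.Ici b) := by
  intro n
  induction n with
  | zero => intro p _; simp
  | succ m ih =>
    intro p hp
    have hne : p.length ≠ 0 := by omega
    have hlt : p.eraseLast.last < p.last := p.eraseLast_last_rel_last hne
    have hlen : p.eraseLast.length = m := by simp [hp]
    have IH := ih p.eraseLast hlen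
    set a := p.eraseLast.last with ha
    set c := p.last with hc
    have key : (a ⊓ b < c ⊓ b ∧ a ⊔ b ≤ c ⊔ b) ∨ (a ⊓ b ≤ c ⊓ b ∧ a ⊔ b < c ⊔ b) := by
      have h1 : a ⊓ b ≤ c ⊓ b := inf_le_inf_right b hlt.le
      have h2 : a ⊔ b ≤ c ⊔ b := sup_le_sup_right hlt.le b
      rcases h1.lt_or_eq with h | h
      · exact Or.inl ⟨h, h2⟩
      · refine Or.inr ⟨h1, h2.lt_of_ne fun h' => ?_⟩
        exact absurd (eq_of_le_of_inf_le_of_sup_le hlt.le (le_of_eq h.symm) (le_of_eq h'.symm))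
          hlt.ne
    push_cast
    rcases key with ⟨hlt1, hle2⟩ | ⟨hle1, hlt2⟩
    · calc (m : ℕ∞) + 1
          ≤ (Order.height (⟨a ⊓ b, inf_le_right⟩ : Set.Iic b) + 1)
            + Order.height (⟨a ⊔ b, le_sup_right⟩ : Set.Ici b) := by
            rw [add_right_comm]; exact add_le_add_left IH 1
        _ ≤ Order.height (⟨c ⊓ b, inf_le_right⟩ : Set.Iic b)
            + Order.height (⟨c ⊔ b, le_sup_right⟩ : Set.Ici b) :=
            add_le_add (step_ineq (β := Set.Iic b) (Subtype.mk_lt_mk.mpr hlt1) le_rfl)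
              (Order.height_mono (Subtype.mk_le_mk.mpr hle2))
    · calc (m : ℕ∞) + 1
          ≤ Order.height (⟨a ⊓ b, inf_le_right⟩ : Set.Iic b)
            + (Order.height (⟨a ⊔ b, le_sup_right⟩ : Set.Ici b) + 1) := by
            rw [← add_assoc]; exact add_le_add_left IH 1
        _ ≤ Order.height (⟨c ⊓ b, inf_le_right⟩ : Set.Iic b)
            + Order.height (⟨c ⊔ b, le_sup_right⟩ : Set.Ici b) :=
            add_le_add (Order.height_mono (Subtype.mk_le_mk.mpr hle1))
              (step_ineq (β := Set.Ici b) (Subtype.mk_lt_mk.mpr hlt2) le_rfl)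

private lemma krullDim_le_add (b : α) :
    krullDim α ≤ krullDim (Set.Iic b) + krullDim (Set.Ici b) := by
  rw [krullDim]
  apply iSup_le
  intro p
  have h := chain_len_le b p.length p rfl
  calc (p.length : WithBot ℕ∞)
      ≤ ((Order.height (⟨p.last ⊓ b, inf_le_right⟩ : Set.Iic b)
        + Order.height (⟨p.last ⊔ b, le_sup_right⟩ : Set.Ici b) : ℕ∞) : WithBot ℕ∞) := by
        exact_mod_cast h
    _ ≤ krullDim (Set.Iic b) + krullDim (Set.Ici b) := by
        push_cast
        exact add_le_add (Order.height_le_krullDim _) (Order.height_le_krullDim _)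

private lemma cat_le (b : α) (p : LTSeries (Set.Iic b)) (q : LTSeries (Set.Ici b)) :
    ((p.length + q.length : ℕ) : WithBot ℕ∞) ≤ krullDim α := by
  have hval1 : StrictMono (fun x : Set.Iic b => (x : α)) := fun _ _ h => h
  have hval2 : StrictMono (fun x : Set.Ici b => (x : α)) := fun _ _ h => h
  set p' := p.map _ hval1 with hp'
  set q' := q.map _ hval2 with hq'
  have hle : p'.last ≤ q'.head := by
    simp only [hp', hq', LTSeries.last_map, LTSeries.head_map]
    exact le_trans p.last.2 q.head.2
  rcases hle.lt_or_eq with h | h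
  · have := LTSeries.length_le_krullDim (p'.append q' h)
    refine le_trans ?_ this
    have hl : (p'.append q' h).length = p.length + q.length + 1 := rfl
    rw [hl]
    exact_mod_cast Nat.le_succ _
  · have := LTSeries.length_le_krullDim (p'.smash q' h)
    refine le_trans ?_ this
    have hl : (p'.smash q' h).length = p.length + q.length := rfl
    rw [hl]

private lemma add_le_krullDim (b : α) :
    krullDim (Set.Iic b) + krullDim (Set.Ici b) ≤ krullDim α := by
  have h1 : Nonempty (Set.Iic b) := ⟨⟨b, le_rfl⟩⟩
  have h2 : Nonempty (Set.Ici b) := ⟨⟨b, le_rfl⟩⟩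
  have hne : Nonempty α := ⟨b⟩
  have hk : ∃ k : ℕ∞, krullDim α = (k : WithBot ℕ∞) := by
    have : krullDim α ≠ ⊥ := by
      have := krullDim_nonneg (α := α)
      intro h; rw [h] at this; exact absurd this (by simp)
    exact WithBot.ne_bot_iff_exists.mp this |>.imp fun k h => h.symm
  obtain ⟨k, hk⟩ := hk
  rw [krullDim_eq_iSup_length (α := Set.Iic b), krullDim_eq_iSup_length (α := Set.Ici b),
    ← WithBot.coe_add, hk, WithBot.coe_le_coe, ENat.iSup_add]
  apply iSup_le
  intro p
  rw [ENat.add_iSup]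
  apply iSup_le
  intro q
  have := cat_le b p q
  rw [hk] at this
  exact_mod_cast this

/-- Krull dimension is additive at any element of a modular lattice. -/
lemma krullDim_eq_add (b : α) :
    krullDim α = krullDim (Set.Iic b) + krullDim (Set.Ici b) :=
  le_antisymm (krullDim_le_add b) (add_le_krullDim b)

end KrullAdd

section MLen
variable {R M M' : Type*} [CommRing R] [AddCommGroup M] [Module R M]
  [AddCommGroup M'] [Module R M']

lemma mLen_congr (e : M ≃ₗ[R] M') : mLen R M = mLen R M' :=
  Order.krullDim_eq_of_orderIso (Submodule.orderIsoMapComap e)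

lemma mLen_add (N : Submodule R M) : mLen R M = mLen R ↥N + mLen R (M ⧸ N) := by
  rw [mLen, krullDim_eq_add N]
  congr 1
  · exact (Order.krullDim_eq_of_orderIso
      ((Submodule.MapSubtype.orderIso N).symm : {p : Submodule R M // p ≤ N} ≃o _)).symm ▸ rfl
  · exact (Order.krullDim_eq_of_orderIso (Submodule.comapMkQRelIso N)).symm

end MLen

section Transfer
variable {R S : Type*} [CommRing R] [CommRing S]

/-- Interval order iso along a surjective ring hom. -/
noncomputable def intervalIso (f : R →+* S) (hf : Function.Surjective f) (Ib : Ideal S) :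
    {p : Ideal S // Ib ≤ p} ≃o {I : Ideal R // Ib.comap f ≤ I} where
  toFun p := ⟨p.1.comap f, Ideal.comap_mono p.2⟩
  invFun I := ⟨I.1.map f, by
    conv_lhs => rw [← Ideal.map_comap_of_surjective f hf Ib]
    exact Ideal.map_mono I.2⟩
  left_inv p := Subtype.ext (Ideal.map_comap_of_surjective f hf p.1)
  right_inv I := Subtype.ext (by
    show Ideal.comap f (Ideal.map f I.1) = I.1
    rw [Ideal.comap_map_of_surjective f hf I.1, sup_eq_left]
    exact le_trans (Ideal.comap_mono bot_le) I.2)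
  map_rel_iff' {p q} := by
    constructor
    · intro h
      have h' : Ideal.comap f p.1 ≤ Ideal.comap f q.1 := h
      have := Ideal.map_mono (f := f) h'
      rw [Ideal.map_comap_of_surjective f hf, Ideal.map_comap_of_surjective f hf] at this
      exact this
    · exact fun h => Ideal.comap_mono h

lemma mLen_quot_ideal (I : Ideal R) :
    mLen R (R ⧸ I) = Order.krullDim {p : Ideal R // I ≤ p} :=
  Order.krullDim_eq_of_orderIso (Submodule.comapMkQRelIso I)

/-- Transfer of quotient lengths along a surjective ring hom. -/
lemma mLen_quot_comap (f : R →+* S) (hf : Function.Surjective f) (Ib : Ideal S) :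
    mLen S (S ⧸ Ib) = mLen R (R ⧸ Ib.comap f) := by
  rw [mLen_quot_ideal, mLen_quot_ideal]
  exact Order.krullDim_eq_of_orderIso (intervalIso f hf Ib)

end Transfer

section Core
variable {R : Type*} [CommRing R]

/-- Core length identity. -/
lemma core_lengths (I J : Ideal R) (x : R)
    (hcolon : Submodule.colon J (Ideal.span {x}) = I ⊔ Submodule.colon (⊥ : Ideal R) (Ideal.span {x}))
    (hdisj : I ⊓ Submodule.colon (⊥ : Ideal R) (Ideal.span {x}) = ⊥) :
    mLen R (R ⧸ (J ⊔ Ideal.span {x})) + mLen R (R ⧸ I)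
      = mLen R (R ⧸ J) + mLen R ↥(Submodule.colon (⊥ : Ideal R) (Ideal.span {x})) := by
  set X : Ideal R := Ideal.span {x} with hX
  set A : Ideal R := Submodule.colon (⊥ : Ideal R) X with hA
  have step1 : mLen R (R ⧸ J) = mLen R (R ⧸ (I ⊔ A)) + mLen R (R ⧸ (J ⊔ X)) := by
    have h1 := mLen_add (Submodule.map J.mkQ (J ⊔ X))
    have e1 : (((R ⧸ J) ⧸ Submodule.map J.mkQ (J ⊔ X))) ≃ₗ[R] R ⧸ (J ⊔ X) :=
      Submodule.quotientQuotientEquivQuotient J (J ⊔ X) le_sup_left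
    set φ : R →ₗ[R] R ⧸ J := J.mkQ.comp (LinearMap.toSpanSingleton R R x) with hφ
    have hker : LinearMap.ker φ = Submodule.colon J X := by
      ext r
      simp only [hφ, LinearMap.mem_ker, LinearMap.comp_apply,
        LinearMap.toSpanSingleton_apply, Submodule.mkQ_apply,
        Submodule.Quotient.mk_eq_zero]
      rw [hX, ← Ideal.submodule_span_eq, Submodule.mem_colon_span_singleton]
    have hrange : LinearMap.range φ = Submodule.map J.mkQ (J ⊔ X) := by
      rw [Submodule.map_sup, Submodule.mkQ_map_self, bot_sup_eq, hφ,
        LinearMap.range_comp, ← LinearMap.span_singleton_eq_range, hX,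
        Ideal.submodule_span_eq]
    have e2 : (R ⧸ Submodule.colon J X) ≃ₗ[R] ↥(Submodule.map J.mkQ (J ⊔ X)) := by
      rw [← hrange, ← hker]
      exact φ.quotKerEquivRange
    rw [h1, ← mLen_congr e2, ← mLen_congr e1, hcolon]
  have step2 : mLen R (R ⧸ I) = mLen R ↥A + mLen R (R ⧸ (I ⊔ A)) := by
    have h1 := mLen_add (Submodule.map I.mkQ (I ⊔ A))
    have e1 : (((R ⧸ I) ⧸ Submodule.map I.mkQ (I ⊔ A))) ≃ₗ[R] R ⧸ (I ⊔ A) :=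
      Submodule.quotientQuotientEquivQuotient I (I ⊔ A) le_sup_left
    set ψ : ↥A →ₗ[R] R ⧸ I := I.mkQ.comp (A.subtype) with hψ
    have hinj : Function.Injective ψ := by
      rw [← LinearMap.ker_eq_bot]
      ext ⟨a, ha⟩
      simp only [hψ, LinearMap.mem_ker, LinearMap.comp_apply, Submodule.subtype_apply,
        Submodule.mkQ_apply, Submodule.Quotient.mk_eq_zero, Submodule.mem_bot]
      constructor
      · intro haI
        have h2 : a ∈ I ⊓ A := ⟨haI, ha⟩
        rw [hdisj] at h2
        exact Subtype.ext (by simpa using h2)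
      · intro h; rw [show a = 0 from congrArg Subtype.val h]; exact I.zero_mem
    have hrange : LinearMap.range ψ = Submodule.map I.mkQ (I ⊔ A) := by
      rw [Submodule.map_sup, Submodule.mkQ_map_self, bot_sup_eq, hψ,
        LinearMap.range_comp, Submodule.range_subtype]
    have e2 : ↥A ≃ₗ[R] ↥(Submodule.map I.mkQ (I ⊔ A)) := by
      rw [← hrange]
      exact LinearEquiv.ofInjective ψ hinj
    rw [h1, ← mLen_congr e2, ← mLen_congr e1]
  rw [step1, step2]
  ring
end Core

section Alg
open IsLocalRing
variable {R : Type*} [CommRing R] [IsLocalRing R] [IsNoetherianRing R]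

/-- If the annihilator of `x` has finite length `l`, then some power of the
maximal ideal kills it. -/
lemma ann_nilpotent (x : R) (l : ℕ)
    (hl : (l : WithBot ℕ∞) = mLen R ↥(Submodule.colon (⊥ : Ideal R) (Ideal.span {x}))) :
    ∃ j : ℕ, (maximalIdeal R) ^ j • (Submodule.colon (⊥ : Ideal R) (Ideal.span {x}) : Ideal R) = ⊥ := by
  set A : Ideal R := Submodule.colon (⊥ : Ideal R) (Ideal.span {x}) with hA
  set m : Ideal R := maximalIdeal R with hm
  set f : ℕ → Ideal R := fun i => m ^ i • A with hf
  have hfle : ∀ i, f i ≤ A := by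
    intro i
    exact le_trans (Submodule.smul_le_right) le_rfl
  have hanti : ∀ i, f (i + 1) ≤ f i := by
    intro i
    show m ^ (i+1) • A ≤ m ^ i • A
    rw [pow_succ]
    rw [Ideal.smul_eq_mul, Ideal.smul_eq_mul, mul_assoc]
    exact Ideal.mul_mono_right Ideal.mul_le_right
  -- find a stabilization point below l
  by_cases hstab : ∃ i ≤ l, f (i + 1) = f i
  · obtain ⟨i, _, hi⟩ := hstab
    refine ⟨i, ?_⟩
    have hfg : (f i).FG := IsNoetherian.noetherian _
    have hsmul : f i ≤ m • f i := by
      have : m • f i = f (i + 1) := by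
        show m • (m ^ i • A) = m ^ (i+1) • A
        rw [pow_succ']
        rw [Ideal.smul_eq_mul, Ideal.smul_eq_mul, Ideal.smul_eq_mul, mul_assoc]
      rw [this, hi]
    exact Submodule.eq_bot_of_le_smul_of_le_jacobson_bot m (f i) hfg hsmul
      (IsLocalRing.maximalIdeal_le_jacobson ⊥)
  · exfalso
    push_neg at hstab
    have hstrict : ∀ i ≤ l, f (i + 1) < f i :=
      fun i hi => lt_of_le_of_ne (hanti i) (hstab i hi)
    -- build an LTSeries in Submodule R ↥A of length l + 1
    let g : Fin (l + 2) → Submodule R ↥A :=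
      fun j => Submodule.comap A.subtype (f (l + 1 - j.1))
    have hg : ∀ (j : Fin (l + 1)), g j.castSucc < g j.succ := by
      intro j
      have hj : j.1 ≤ l := Nat.lt_succ_iff.mp j.2
      have hs : (j.succ : ℕ) = (j : ℕ) + 1 := rfl
      have hcs : (j.castSucc : ℕ) = (j : ℕ) := rfl
      have h1 : l + 1 - j.succ.1 ≤ l := by omega
      have h2 : (l + 1 - j.castSucc.1) = (l + 1 - j.succ.1) + 1 := by
        simp only [Fin.coe_castSucc, Fin.val_succ]; omega
      have hlt : f ((l + 1 - j.succ.1) + 1) < f (l + 1 - j.succ.1) :=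
        hstrict _ h1
      rw [show g j.castSucc = Submodule.comap A.subtype (f ((l + 1 - j.succ.1) + 1)) by
        simp only [g]; rw [h2]]
      show Submodule.comap A.subtype _ < Submodule.comap A.subtype _
      apply lt_of_le_of_ne (Submodule.comap_mono hlt.le)
      intro heq
      apply hlt.ne
      have e1 := congrArg (Submodule.map A.subtype) heq
      rw [Submodule.map_comap_subtype, Submodule.map_comap_subtype,
        inf_eq_right.mpr (hfle _), inf_eq_right.mpr (hfle _)] at e1
      exact e1
    let p : LTSeries (Submodule R ↥A) := ⟨l + 1, g, hg⟩
    have := LTSeries.length_le_krullDim p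
    rw [show Order.krullDim (Submodule R ↥A) = mLen R ↥A from rfl, ← hl] at this
    have : ((l + 1 : ℕ) : WithBot ℕ∞) ≤ ((l : ℕ) : WithBot ℕ∞) := this
    exact absurd (by exact_mod_cast this) (by omega)

end Alg

section Alg2
open IsLocalRing
variable {R : Type*} [CommRing R] [IsLocalRing R] [IsNoetherianRing R]

lemma colon_eventually (Q K : Ideal R) (x : R)
    (hQm : Q ≤ maximalIdeal R)
    (hxQ : x ∈ Q)
    (cG : ℕ) (hcG : 0 < cG)
    (hG : ∀ n > cG, Submodule.colon (Q ^ n) (Ideal.span {x}) ⊓ Q ^ cG = Q ^ (n - 1))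
    (cF : ℕ) (hcF : 0 < cF)
    (hF : ∀ n > cF,
      Submodule.colon (K * Q ^ (n + 1)) (Ideal.span {x}) ⊓ Q ^ n ≤ K * Q ^ n)
    (j : ℕ) (hj : (maximalIdeal R) ^ j • (Submodule.colon (⊥ : Ideal R) (Ideal.span {x}) : Ideal R) = ⊥) :
    ∃ N : ℕ, ∀ n ≥ N,
      (Submodule.colon (K * Q ^ (n + 1)) (Ideal.span {x})
          = K * Q ^ n ⊔ Submodule.colon (⊥ : Ideal R) (Ideal.span {x}))
        ∧ (K * Q ^ n) ⊓ Submodule.colon (⊥ : Ideal R) (Ideal.span {x}) = ⊥ := by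
  set X : Ideal R := Ideal.span {x} with hX
  set A : Ideal R := Submodule.colon (⊥ : Ideal R) X with hA
  have hcolon_mem : ∀ (N : Ideal R) (z : R), z ∈ Submodule.colon N X ↔ z * x ∈ N := by
    intro N z
    rw [hX, ← Ideal.submodule_span_eq, Submodule.mem_colon_span_singleton, smul_eq_mul]
  obtain ⟨k, hk⟩ := Ideal.exists_pow_inf_eq_pow_smul (R := R) (M := R) Q X
  obtain ⟨k₂, hk₂⟩ := Ideal.exists_pow_inf_eq_pow_smul (R := R) (M := R) Q A
  refine ⟨cG + cF + k + k₂ + j + 2, fun n hn => ?_⟩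
  constructor
  · apply le_antisymm
    · intro y hy
      have hyx : y * x ∈ K * Q ^ (n + 1) := (hcolon_mem _ y).mp hy
      have hyx2 : y * x ∈ Q ^ (n + 1) ⊓ X :=
        ⟨Ideal.mul_le_right hyx, Ideal.mem_span_singleton.mpr ⟨y, mul_comm y x⟩⟩
      have hAR : Q ^ (n+1) ⊓ X ≤ X * Q ^ (n + 1 - k) := by
        have h1 := hk (n+1) (by omega)
        rw [Ideal.smul_eq_mul, Ideal.mul_top] at h1
        rw [h1, Ideal.smul_eq_mul, mul_comm]
        exact Ideal.mul_mono_left inf_le_right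
      obtain ⟨z, hzQ, hzx⟩ := Ideal.mem_span_singleton_mul.mp (hAR hyx2)
      have hyz : (y - z) ∈ A := by
        rw [hA]
        refine (hcolon_mem ⊥ (y - z)).mpr ?_
        rw [sub_mul, mul_comm z x, hzx, sub_self]
        exact Submodule.zero_mem ⊥
      have hzxKQ : z * x ∈ K * Q ^ (n + 1) := by
        rw [mul_comm z x, hzx]; exact hyx
      have hzQn : z ∈ Q ^ n := by
        have h2 := hG (n+1) (by omega)
        have h3 : z ∈ Submodule.colon (Q ^ (n+1)) X ⊓ Q ^ cG :=
          ⟨(hcolon_mem _ z).mpr (Ideal.mul_le_right hzxKQ),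
            Ideal.pow_le_pow_right (by omega) hzQ⟩
        rw [hX] at h2
        rw [h2] at h3
        simpa using h3
      have hzK : z ∈ K * Q ^ n := by
        refine hF n (by omega) ⟨?_, hzQn⟩
        rw [hX]
        exact (hcolon_mem _ z).mpr hzxKQ
      exact Submodule.mem_sup.mpr ⟨z, hzK, y - z, hyz, by ring⟩
    · apply sup_le
      · intro z hz
        refine (hcolon_mem _ z).mpr ?_
        have := Ideal.mul_mem_mul hz hxQ
        rwa [mul_assoc, ← pow_succ] at this
      · intro z hz
        refine (hcolon_mem _ z).mpr ?_
        have h0 : z * x = 0 := by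
          have := (hcolon_mem ⊥ z).mp (by rwa [hA] at hz)
          simpa using this
        rw [h0]
        exact Submodule.zero_mem _
  · apply le_antisymm _ bot_le
    calc (K * Q ^ n) ⊓ A ≤ Q ^ n ⊓ A := inf_le_inf_right A Ideal.mul_le_right
      _ = Q ^ (n - k₂) • (Q ^ k₂ • ⊤ ⊓ A) := by
          have h1 := hk₂ n (by omega)
          rwa [Ideal.smul_eq_mul, Ideal.mul_top] at h1
      _ ≤ (maximalIdeal R) ^ j • A := by
          apply Submodule.smul_mono _ inf_le_right
          exact le_trans (Ideal.pow_right_mono hQm (n - k₂))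
            (Ideal.pow_le_pow_right (by omega))
      _ = ⊥ := hj

end Alg2

lemma hilb_diff (e : ℕ) (a : ℕ → ℤ) (n : ℕ) (hn : 1 ≤ n) :
    hilbSum (e + 1) a (n + 1) - hilbSum (e + 1) a n = hilbSum e a (n + 1) := by
  unfold hilbSum
  rw [Finset.sum_range_succ, Finset.sum_range_succ (n := e + 1)]
  have key : ∀ i ∈ Finset.range (e + 1),
      (-1 : ℤ) ^ i * a i * ((n + 1 + (e+1) - i - 1).choose ((e+1) - i) : ℤ)
        - (-1 : ℤ) ^ i * a i * ((n + (e+1) - i - 1).choose ((e+1) - i) : ℤ)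
      = (-1 : ℤ) ^ i * a i * ((n + 1 + e - i - 1).choose (e - i) : ℤ) := by
    intro i hi
    have hi' : i ≤ e := by
      have := Finset.mem_range.mp hi; omega
    have h1 : n + 1 + (e+1) - i - 1 = (n + e - i) + 1 := by omega
    have h2 : n + (e+1) - i - 1 = n + e - i := by omega
    have h3 : (e+1) - i = (e - i) + 1 := by omega
    have h4 : n + 1 + e - i - 1 = n + e - i := by omega
    rw [h1, h2, h3, h4, Nat.choose_succ_succ]
    push_cast
    ring
  have hlast : (n + 1 + (e+1) - (e+1) - 1).choose ((e+1) - (e+1))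
      = (n + (e+1) - (e+1) - 1).choose ((e+1) - (e+1)) := by
    rw [Nat.sub_self, Nat.choose_zero_right, Nat.choose_zero_right]
  rw [hlast]
  rw [show ∀ (S1 S2 S3 t : ℤ), (S1 + t) - (S2 + t) = S3 ↔ S1 - S2 = S3 from
    fun _ _ _ _ => by constructor <;> intro h <;> linarith]
  rw [← Finset.sum_sub_distrib]
  exact Finset.sum_congr rfl key

lemma hilb_unique : ∀ (e : ℕ) (a b : ℕ → ℤ) (N : ℕ),
    (∀ n ≥ N, hilbSum e a n = hilbSum e b n) → ∀ i ≤ e, a i = b i := by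
  intro e
  induction e with
  | zero =>
    intro a b N h i hi
    interval_cases i
    have := h N le_rfl
    simpa [hilbSum] using this
  | succ e ih =>
    intro a b N h i hi
    have h' : ∀ m ≥ N + 2, hilbSum e a m = hilbSum e b m := by
      intro m hm
      obtain ⟨n, rfl⟩ : ∃ n, m = n + 1 := ⟨m - 1, by omega⟩
      rw [← hilb_diff e a n (by omega), ← hilb_diff e b n (by omega),
        h n (by omega), h (n+1) (by omega)]
    have hIH : ∀ i ≤ e, a i = b i := ih a b (N + 2) h'
    rcases Nat.lt_succ_iff_lt_or_eq.mp (Nat.lt_succ_of_le hi) with hlt | rfl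
    · exact hIH i (by omega)
    · -- i = e + 1
      have heq := h N le_rfl
      unfold hilbSum at heq
      rw [Finset.sum_range_succ, Finset.sum_range_succ (n := e + 1)] at heq
      have hsum : ∑ i ∈ Finset.range (e + 1),
          (-1 : ℤ) ^ i * a i * ((N + (e+1) - i - 1).choose ((e+1) - i) : ℤ)
          = ∑ i ∈ Finset.range (e + 1),
          (-1 : ℤ) ^ i * b i * ((N + (e+1) - i - 1).choose ((e+1) - i) : ℤ) := by
        apply Finset.sum_congr rfl
        intro i hi2
        rw [hIH i (by have := Finset.mem_range.mp hi2; omega)]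
      rw [hsum] at heq
      have hc : ((N + (e+1) - (e+1) - 1).choose ((e+1) - (e+1)) : ℤ) = 1 := by
        rw [Nat.sub_self, Nat.choose_zero_right]; norm_num
      rw [hc] at heq
      have : (-1 : ℤ) ^ (e+1) * a (e+1) = (-1 : ℤ) ^ (e+1) * b (e+1) := by linarith
      have hne : (-1 : ℤ) ^ (e+1) ≠ 0 := by positivity
      exact mul_left_cancel₀ hne this

lemma hilb_shift (e : ℕ) (g : ℕ → ℤ) (l : ℤ) (m : ℕ) :
    hilbSum e (fun i => if i = e then g i + (-1 : ℤ) ^ e * l else g i) m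
      = hilbSum e g m + l := by
  unfold hilbSum
  rw [Finset.sum_range_succ, Finset.sum_range_succ (n := e)]
  have h1 : ∑ i ∈ Finset.range e,
      (-1 : ℤ) ^ i * (if i = e then g i + (-1 : ℤ) ^ e * l else g i)
        * ((m + e - i - 1).choose (e - i) : ℤ)
      = ∑ i ∈ Finset.range e,
      (-1 : ℤ) ^ i * g i * ((m + e - i - 1).choose (e - i) : ℤ) := by
    apply Finset.sum_congr rfl
    intro i hi
    rw [if_neg (by have := Finset.mem_range.mp hi; omega)]
  rw [h1]
  simp only [if_pos rfl, Nat.sub_self, Nat.choose_zero_right]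
  have h2 : (-1 : ℤ) ^ e * (-1 : ℤ) ^ e = 1 := by
    rw [← pow_add]
    exact Even.neg_one_pow ⟨e, rfl⟩
  push_cast
  linear_combination l * h2

/-- behaviour of the Hilbert coefficients `g_i` modulo a superficial
element: `g_i(Q̄) = g_i(Q)` for `0 ≤ i ≤ d-2` and
`g_{d-1}(Q̄) = g_{d-1}(Q) + (-1)^{d-1} ℓ(0 : x)`. -/
theorem stmt_6 (R : Type) [CommRing R] [IsLocalRing R] [IsNoetherianRing R]
    (d : ℕ) (hd : 0 < d) (hdim : ringKrullDim R = d)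
    (Q K : Ideal R) (hQprim : Q.radical = maximalIdeal R) (hQK : Q ≤ K)
    (x : R) (hG : IsGSuperficial Q x) (hF : IsFSuperficial Q K x)
    (lenK lenKbar : ℕ → ℕ)
    (hlenK : ∀ n, (lenK n : WithBot ℕ∞) = mLen R (R ⧸ (K * Q ^ n)))
    (hlenKbar : ∀ n, (lenKbar n : WithBot ℕ∞) =
      mLen (R ⧸ Ideal.span {x}) ((R ⧸ Ideal.span {x}) ⧸
        (K.map (Ideal.Quotient.mk (Ideal.span {x})) *
          (Q.map (Ideal.Quotient.mk (Ideal.span {x}))) ^ n)))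
    (g gbar : ℕ → ℤ)
    (hg : ∃ N, ∀ n ≥ N, (lenK n : ℤ) = hilbSum d g n)
    (hgbar : ∃ N, ∀ n ≥ N, (lenKbar n : ℤ) = hilbSum (d - 1) gbar n)
    (lAnn : ℕ)
    (hlAnn : (lAnn : WithBot ℕ∞) = mLen R ↥(Submodule.colon (⊥ : Ideal R) (Ideal.span {x}))) :
    (∀ i, i + 2 ≤ d → gbar i = g i) ∧
    gbar (d - 1) = g (d - 1) + (-1 : ℤ) ^ (d - 1) * (lAnn : ℤ) := by
  classical
  obtain ⟨hxQ, hxQ2, cG, hcG, hGc⟩ := hG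
  obtain ⟨hxQ', hxKQ, cF, hcF, hFc⟩ := hF
  obtain ⟨j, hj⟩ := ann_nilpotent x lAnn hlAnn
  have hQm : Q ≤ maximalIdeal R := le_trans Ideal.le_radical (le_of_eq hQprim)
  obtain ⟨Nc, hNc⟩ := colon_eventually Q K x hQm hxQ cG hcG hGc cF hcF hFc j hj
  -- Part B : the recursion for the length function
  have hrec : ∀ n ≥ Nc, lenKbar (n+1) + lenK n = lenK (n+1) + lAnn := by
    intro n hn
    obtain ⟨hcol, hdisj⟩ := hNc n hn
    have hsur : Function.Surjective (Ideal.Quotient.mk (Ideal.span {x})) :=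
      Ideal.Quotient.mk_surjective
    have hbar := hlenKbar (n+1)
    rw [mLen_quot_comap _ hsur] at hbar
    have hcomap : Ideal.comap (Ideal.Quotient.mk (Ideal.span {x}))
        (K.map (Ideal.Quotient.mk (Ideal.span {x})) *
          (Q.map (Ideal.Quotient.mk (Ideal.span {x}))) ^ (n+1))
        = (K * Q ^ (n+1)) ⊔ Ideal.span {x} := by
      rw [← Ideal.map_pow, ← Ideal.map_mul, Ideal.comap_map_of_surjective _ hsur]
      congr 1
      rw [← RingHom.ker_eq_comap_bot, Ideal.mk_ker]
    rw [hcomap] at hbar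
    have hcore := core_lengths (K * Q ^ n) (K * Q ^ (n+1)) x hcol hdisj
    rw [← hbar, ← hlenK n, ← hlenK (n+1), ← hlAnn] at hcore
    have hcast : ((lenKbar (n+1) + lenK n : ℕ) : WithBot ℕ∞)
        = ((lenK (n+1) + lAnn : ℕ) : WithBot ℕ∞) := by
      push_cast
      exact_mod_cast hcore
    exact_mod_cast hcast
  -- Part A : comparing the Hilbert polynomials
  obtain ⟨Ng, hgN⟩ := hg
  obtain ⟨Ngb, hgbN⟩ := hgbar
  obtain ⟨e, rfl⟩ : ∃ e, d = e + 1 := ⟨d - 1, by omega⟩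
  simp only [Nat.add_sub_cancel] at hgbN ⊢
  set g'' : ℕ → ℤ := fun i => if i = e then g i + (-1 : ℤ) ^ e * (lAnn : ℤ) else g i
    with hg''def
  have hagree : ∀ m ≥ Ng + Ngb + Nc + 2, hilbSum e gbar m = hilbSum e g'' m := by
    intro m hm
    obtain ⟨n, rfl⟩ : ∃ n, m = n + 1 := ⟨m - 1, by omega⟩
    have h1 : (lenKbar (n+1) : ℤ) = hilbSum e gbar (n+1) := hgbN (n+1) (by omega)
    have h2 : (lenKbar (n+1) : ℤ) = (lenK (n+1) : ℤ) - (lenK n : ℤ) + (lAnn : ℤ) := by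
      have := hrec n (by omega)
      omega
    have h3 : hilbSum e gbar (n+1)
        = hilbSum (e+1) g (n+1) - hilbSum (e+1) g n + (lAnn : ℤ) := by
      rw [← h1, h2, hgN (n+1) (by omega), hgN n (by omega)]
    rw [h3, hilb_diff e g n (by omega), hilb_shift]
  have huniq := hilb_unique e gbar g'' _ hagree
  constructor
  · intro i hi
    have h := huniq i (by omega)
    rw [h, hg''def]
    simp only [if_neg (by omega : i ≠ e)]
  · have h := huniq e le_rfl
    rw [h, hg''def]
    simp
end
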